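/- Let a, b, c be three distinct symbols of A_q. Then: (i) in every string w ∈ D*(a·b·b·c), there are no positions i < j with w_i = c and w_j = a (the symbol a never appears after the symbol c); (ii) in every string w ∈ D*(a·b·c·a·b·c), there exist positions i < j with w_i = c and w_j = a. -/

import Mathlib

/-- A single tandem duplication of length `k`: `u ++ v ++ w ↦ u ++ v ++ v ++ w` with `|v| = k`. -/
def DupStepLen (q k : ℕ) (x y : List (Fin q)) : Prop :=
  ∃ u v w : List (Fin q), v.length = k ∧ x = u ++ v ++ w ∧ y = u ++ v ++ v ++ w

/-- `DescL q ks x y`: `y` is obtained from `x` by successive tandem duplications whose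
lengths are given by the list `ks`. -/
def DescL (q : ℕ) : List ℕ → List (Fin q) → List (Fin q) → Prop
  | [], x, y => y = x
  | k :: ks, x, y => ∃ z, DupStepLen q k x z ∧ DescL q ks z y

/-- `y ∈ D^t(x)`: `y` is obtained from `x` by `t` tandem duplications, each of length ≤ 3. -/
def DescT (q t : ℕ) (x y : List (Fin q)) : Prop :=
  ∃ ks : List ℕ, ks.length = t ∧ (∀ k ∈ ks, 1 ≤ k ∧ k ≤ 3) ∧ DescL q ks x y

/-- `y` is obtained from `x` by `t` tandem duplications of length ≤ 3, exactly `b` of which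
have length 3. -/
def DescTB (q t b : ℕ) (x y : List (Fin q)) : Prop :=
  ∃ ks : List ℕ, ks.length = t ∧ (∀ k ∈ ks, 1 ≤ k ∧ k ≤ 3) ∧ ks.count 3 = b ∧ DescL q ks x y

/-- `y ∈ D*(x)`: `y` is a descendant of `x` under tandem duplications of length ≤ 3. -/
def Desc (q : ℕ) (x y : List (Fin q)) : Prop := ∃ t, DescT q t x y

/-- Two strings are confusable iff they have a common descendant. -/
def Confusable (q : ℕ) (x y : List (Fin q)) : Prop := ∃ z, Desc q x z ∧ Desc q y z

/-- A zero-error code: a set of pairwise non-confusable strings. -/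
def ZeroErrorCode (q : ℕ) (C : Set (List (Fin q))) : Prop :=
  ∀ x ∈ C, ∀ y ∈ C, x ≠ y → ¬ Confusable q x y

/-- A string is irreducible if it contains no substring `a·a`, `a·b·a·b`, or `a·b·c·a·b·c`. -/
def IrreducibleStr (q : ℕ) (x : List (Fin q)) : Prop :=
  (∀ a : Fin q, ¬ [a, a] <:+: x) ∧
  (∀ a b : Fin q, ¬ [a, b, a, b] <:+: x) ∧
  (∀ a b c : Fin q, ¬ [a, b, c, a, b, c] <:+: x)

/-- `I_q(n)`: the number of irreducible strings of length `n` over the alphabet `A_q`. -/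
noncomputable def IrrCount (q n : ℕ) : ℕ :=
  Set.ncard {x : List (Fin q) | x.length = n ∧ IrreducibleStr q x}

/-- The binary entropy function in base 2 (with `H(0) = H(1) = 0`, since `logb 2 0 = 0`). -/
noncomputable def binH (β : ℝ) : ℝ :=
  -β * Real.logb 2 β - (1 - β) * Real.logb 2 (1 - β)

section Aux

variable {q : ℕ}

private lemma factA (u v w : List (Fin q)) {p : ℕ} (hp : p < u.length + v.length) :
    (u ++ v ++ v ++ w)[p]? = (u ++ v ++ w)[p]? := by
  have h1 : u ++ v ++ v ++ w = (u ++ v) ++ (v ++ w) := by simp [List.append_assoc]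
  have h2 : u ++ v ++ w = (u ++ v) ++ w := by simp [List.append_assoc]
  have hp' : p < (u ++ v).length := by simpa using hp
  rw [h1, h2, List.getElem?_append_left hp', List.getElem?_append_left hp']

private lemma factB (u v w : List (Fin q)) {p : ℕ} (hp : u.length ≤ p) :
    (u ++ v ++ v ++ w)[p + v.length]? = (u ++ v ++ w)[p]? := by
  have h1 : u ++ v ++ v ++ w = u ++ (v ++ (v ++ w)) := by simp [List.append_assoc]
  have h2 : u ++ v ++ w = u ++ (v ++ w) := by simp [List.append_assoc]
  have hp1 : u.length ≤ p + v.length := by omega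
  rw [h1, h2, List.getElem?_append_right hp1, List.getElem?_append_right hp,
    List.getElem?_append_right (show v.length ≤ p + v.length - u.length by omega)]
  congr 1
  omega

/-- No `c` strictly before an `a`. -/
private def NoCA (a c : Fin q) (w : List (Fin q)) : Prop :=
  ∀ i j : ℕ, i < j → w[i]? = some c → w[j]? ≠ some a

/-- Every `a` before a `c` is at distance at least 3. -/
private def Gap3 (a c : Fin q) (w : List (Fin q)) : Prop :=
  ∀ i j : ℕ, i < j → w[i]? = some a → w[j]? = some c → i + 3 ≤ j

private lemma step_preserve {a c : Fin q} (hac : a ≠ c) {k : ℕ} (hk : k ≤ 3)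
    {x y : List (Fin q)} (h : DupStepLen q k x y)
    (h1 : NoCA a c x) (h2 : Gap3 a c x) : NoCA a c y ∧ Gap3 a c y := by
  obtain ⟨u, v, w, hv, rfl, rfl⟩ := h
  set m := u.length with hm
  constructor
  · intro i j hij hc ha
    by_cases hi : i < m + k
    · rw [factA u v w (by omega)] at hc
      by_cases hj : j < m + k
      · rw [factA u v w (by omega)] at ha
        exact h1 i j hij hc ha
      · have hb := factB u v w (p := j - k) (by omega)
        rw [show j - k + v.length = j by omega] at hb
        rw [hb] at ha
        rcases lt_trichotomy i (j - k) with h' | h' | h'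
        · exact h1 i (j - k) h' hc ha
        · rw [h'] at hc; rw [hc] at ha; exact hac (Option.some.inj ha).symm
        · have := h2 (j - k) i h' ha hc
          omega
    · have hbi := factB u v w (p := i - k) (by omega)
      rw [show i - k + v.length = i by omega] at hbi
      rw [hbi] at hc
      have hbj := factB u v w (p := j - k) (by omega)
      rw [show j - k + v.length = j by omega] at hbj
      rw [hbj] at ha
      exact h1 (i - k) (j - k) (by omega) hc ha
  · intro i j hij ha hc
    by_cases hi : i < m + k
    · rw [factA u v w (by omega)] at ha
      by_cases hj : j < m + k
      · rw [factA u v w (by omega)] at hc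
        exact h2 i j hij ha hc
      · have hb := factB u v w (p := j - k) (by omega)
        rw [show j - k + v.length = j by omega] at hb
        rw [hb] at hc
        rcases lt_trichotomy i (j - k) with h' | h' | h'
        · have := h2 i (j - k) h' ha hc; omega
        · rw [h'] at ha; rw [ha] at hc; exact absurd (Option.some.inj hc) hac
        · exact absurd ha (h1 (j - k) i h' hc)
    · have hbi := factB u v w (p := i - k) (by omega)
      rw [show i - k + v.length = i by omega] at hbi
      rw [hbi] at ha
      have hbj := factB u v w (p := j - k) (by omega)
      rw [show j - k + v.length = j by omega] at hbj
      rw [hbj] at hc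
      have := h2 (i - k) (j - k) (by omega) ha hc
      omega

private lemma step_exists {a c : Fin q} {k : ℕ} {x y : List (Fin q)}
    (h : DupStepLen q k x y)
    (he : ∃ i j : ℕ, i < j ∧ x[i]? = some c ∧ x[j]? = some a) :
    ∃ i j : ℕ, i < j ∧ y[i]? = some c ∧ y[j]? = some a := by
  obtain ⟨u, v, w, hv, rfl, rfl⟩ := h
  obtain ⟨i, j, hij, hc, ha⟩ := he
  set m := u.length with hm
  by_cases hi : i < m + k
  · by_cases hj : j < m + k
    · exact ⟨i, j, hij, by rw [factA u v w (by omega)]; exact hc,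
        by rw [factA u v w (by omega)]; exact ha⟩
    · refine ⟨i, j + k, by omega, by rw [factA u v w (by omega)]; exact hc, ?_⟩
      have hb := factB u v w (p := j) (by omega)
      rw [hv] at hb
      rw [hb]; exact ha
  · refine ⟨i + k, j + k, by omega, ?_, ?_⟩
    · have hb := factB u v w (p := i) (by omega)
      rw [hv] at hb; rw [hb]; exact hc
    · have hb := factB u v w (p := j) (by omega)
      rw [hv] at hb; rw [hb]; exact ha

private lemma descL_preserve {a c : Fin q} (hac : a ≠ c) (ks : List ℕ)
    (hks : ∀ k ∈ ks, 1 ≤ k ∧ k ≤ 3) :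
    ∀ x y : List (Fin q), DescL q ks x y → NoCA a c x → Gap3 a c x →
      NoCA a c y ∧ Gap3 a c y := by
  induction ks with
  | nil => intro x y hd h1 h2; rw [hd]; exact ⟨h1, h2⟩
  | cons k ks ih =>
    intro x y hd h1 h2
    obtain ⟨z, hz, hrest⟩ := hd
    have hk : k ≤ 3 := (hks k (by simp)).2
    obtain ⟨h1', h2'⟩ := step_preserve hac hk hz h1 h2
    exact ih (fun k hk => hks k (by simp [hk])) z y hrest h1' h2'

private lemma descL_exists {a c : Fin q} (ks : List ℕ) :
    ∀ x y : List (Fin q), DescL q ks x y →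
      (∃ i j : ℕ, i < j ∧ x[i]? = some c ∧ x[j]? = some a) →
      ∃ i j : ℕ, i < j ∧ y[i]? = some c ∧ y[j]? = some a := by
  induction ks with
  | nil => intro x y hd he; rw [hd]; exact he
  | cons k ks ih =>
    intro x y hd he
    obtain ⟨z, hz, hrest⟩ := hd
    exact ih z y hrest (step_exists hz he)

end Aux

/-- for distinct symbols `a, b, c` of `A_q`:
(i) in every `w ∈ D*(a·b·b·c)` the symbol `a` never appears after the symbol `c`;
(ii) in every `w ∈ D*(a·b·c·a·b·c)` the symbol `a` appears after the symbol `c`. -/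
theorem a_after_c_dichotomy (q : ℕ) (a b c : Fin q)
    (hab : a ≠ b) (hbc : b ≠ c) (hac : a ≠ c) :
    (∀ w : List (Fin q), Desc q [a, b, b, c] w →
      ¬ ∃ i j : ℕ, i < j ∧ w[i]? = some c ∧ w[j]? = some a) ∧
    (∀ w : List (Fin q), Desc q [a, b, c, a, b, c] w →
      ∃ i j : ℕ, i < j ∧ w[i]? = some c ∧ w[j]? = some a) := by
  constructor
  · rintro w ⟨t, ks, hlen, hks, hd⟩ ⟨i, j, hij, hc, ha⟩
    have hbase1 : NoCA a c [a, b, b, c] := by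
      intro i j hij hc ha
      have hi4 : i < 4 := by
        by_contra h
        rw [List.getElem?_eq_none (by simp; omega)] at hc
        exact absurd hc (by simp)
      have hj4 : j < 4 := by
        by_contra h
        rw [List.getElem?_eq_none (by simp; omega)] at ha
        exact absurd ha (by simp)
      interval_cases i <;> interval_cases j <;> simp_all
    have hbase2 : Gap3 a c [a, b, b, c] := by
      intro i j hij ha hc
      have hi4 : i < 4 := by
        by_contra h
        rw [List.getElem?_eq_none (by simp; omega)] at ha
        exact absurd ha (by simp)
      have hj4 : j < 4 := by
        by_contra h
        rw [List.getElem?_eq_none (by simp; omega)] at hc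
        exact absurd hc (by simp)
      interval_cases i <;> interval_cases j <;> simp_all
    exact (descL_preserve hac ks hks _ w hd hbase1 hbase2).1 i j hij hc ha
  · rintro w ⟨t, ks, hlen, hks, hd⟩
    refine descL_exists ks _ w hd ⟨2, 3, by omega, ?_, ?_⟩ <;> rfl
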